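/- Let M ≥ 1 be a natural number and a : ℕ → ℝ with a_i ≥ a_{i+1} for all 0 ≤ i < M (the values are antitone). Then the function F(ε) = ∑_{i=0}^{M} C(M,i)·ε^i·(1-ε)^{M-i}·a_i is antitone (monotonically nonincreasing) on the interval [0,1]. -/

import Mathlib

open Finset

private lemma binom_id1 (M i : ℕ) (hM : 1 ≤ M) :
    ((i + 1) : ℕ) * M.choose (i + 1) = M * (M - 1).choose i := by
  have h := Nat.add_one_mul_choose_eq (M - 1) i
  simp only [Nat.succ_eq_add_one, Nat.sub_add_cancel hM] at h
  rw [Nat.mul_comm]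
  exact h.symm

private lemma binom_id2 (M i : ℕ) (hM : 1 ≤ M) :
    (M - i) * M.choose i = M * (M - 1).choose i := by
  have h := Nat.choose_mul_succ_eq (M - 1) i
  rw [Nat.sub_add_cancel hM] at h
  rw [Nat.mul_comm (M - i), Nat.mul_comm M]
  exact h.symm

private lemma deriv_sum_eq (M : ℕ) (hM : 1 ≤ M) (a : ℕ → ℝ) (ε : ℝ) :
    HasDerivAt (fun ε : ℝ => ∑ i ∈ Finset.range (M + 1),
      (M.choose i : ℝ) * ε ^ i * (1 - ε) ^ (M - i) * a i)
      (∑ i ∈ Finset.range M,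
        (M : ℝ) * ((M - 1).choose i : ℝ) * ε ^ i * (1 - ε) ^ (M - 1 - i) *
          (a (i + 1) - a i)) ε := by
  have key : ∀ i ∈ Finset.range (M + 1),
      HasDerivAt (fun ε : ℝ => (M.choose i : ℝ) * ε ^ i * (1 - ε) ^ (M - i) * a i)
        ((i : ℝ) * (M.choose i : ℝ) * ε ^ (i - 1) * (1 - ε) ^ (M - i) * a i
          - ((M - i : ℕ) : ℝ) * (M.choose i : ℝ) * ε ^ i * (1 - ε) ^ (M - i - 1) * a i) ε := by
    intro i _
    have h1 : HasDerivAt (fun ε : ℝ => ε ^ i) ((i : ℝ) * ε ^ (i - 1)) ε :=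
      hasDerivAt_pow i ε
    have h2 : HasDerivAt (fun ε : ℝ => (1 - ε) ^ (M - i))
        (((M - i : ℕ) : ℝ) * (1 - ε) ^ (M - i - 1) * (-1)) ε := by
      have := (hasDerivAt_pow (M - i) (1 - ε)).comp ε
        ((hasDerivAt_const ε (1:ℝ)).sub (hasDerivAt_id ε))
      simpa [Function.comp_def] using this
    have := ((h1.const_mul (M.choose i : ℝ)).mul h2).mul_const (a i)
    refine this.congr_deriv ?_
    ring
  have hsum := HasDerivAt.fun_sum key
  refine hsum.congr_deriv ?_
  symm
  rw [Finset.sum_sub_distrib,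
    Finset.sum_range_succ'
      (fun i => (i : ℝ) * (M.choose i : ℝ) * ε ^ (i - 1) * (1 - ε) ^ (M - i) * a i) M,
    Finset.sum_range_succ
      (fun i => ((M - i : ℕ) : ℝ) * (M.choose i : ℝ) * ε ^ i * (1 - ε) ^ (M - i - 1) * a i) M]
  simp only [Nat.sub_self, Nat.cast_zero, zero_mul, add_zero, Nat.cast_ofNat,
    CharP.cast_eq_zero, Nat.add_sub_cancel]
  rw [← Finset.sum_sub_distrib]
  apply Finset.sum_congr rfl
  intro i hi
  rw [Finset.mem_range] at hi
  have e1 : M - (i + 1) = M - 1 - i := by omega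
  have e2 : M - i - 1 = M - 1 - i := by omega
  have c1 : (((i+1) : ℕ) : ℝ) * (M.choose (i+1) : ℝ) = (M : ℝ) * ((M - 1).choose i : ℝ) := by
    exact_mod_cast congrArg (Nat.cast (R := ℝ)) (binom_id1 M i hM)
  have c2 : (((M - i) : ℕ) : ℝ) * (M.choose i : ℝ) = (M : ℝ) * ((M - 1).choose i : ℝ) := by
    exact_mod_cast congrArg (Nat.cast (R := ℝ)) (binom_id2 M i hM)
  push_cast [e1, e2] at *
  rw [c1, c2]
  ring

theorem binomial_average_antitone (M : ℕ) (hM : 1 ≤ M) (a : ℕ → ℝ)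
    (ha : ∀ i < M, a (i + 1) ≤ a i) :
    AntitoneOn (fun ε : ℝ => ∑ i ∈ Finset.range (M + 1),
      (M.choose i : ℝ) * ε ^ i * (1 - ε) ^ (M - i) * a i) (Set.Icc (0:ℝ) 1) := by
  apply antitoneOn_of_deriv_nonpos (convex_Icc 0 1)
  · exact Continuous.continuousOn (by
      apply continuous_finset_sum
      intro i _
      fun_prop)
  · intro x _
    exact ((deriv_sum_eq M hM a x).differentiableAt).differentiableWithinAt
  · intro x hx
    rw [interior_Icc] at hx
    obtain ⟨hx0, hx1⟩ := hx
    rw [(deriv_sum_eq M hM a x).deriv]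
    apply Finset.sum_nonpos
    intro i hi
    rw [Finset.mem_range] at hi
    apply mul_nonpos_of_nonneg_of_nonpos
    · apply mul_nonneg (mul_nonneg (mul_nonneg (by positivity) (by positivity))
        (pow_nonneg hx0.le i)) (pow_nonneg (by linarith) _)
    · linarith [ha i hi]
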